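/- For every positive integer n and every a with 0 ≤ a ≤ n, the binary Varshamov–Tenengolts code VT_a(n) satisfies |VT_a(n)| ≥ 2^{n − ⌈log₂(n+1)⌉}. (This follows from the systematic encoder: distinct assignments of bits to the n − ⌈log₂(n+1)⌉ non-dyadic positions yield distinct codewords of VT_a(n).) -/

import Mathlib

/-- VT syndrome of a binary sequence `s_1 ⋯ s_n` (represented 0-indexed):
`syn S = (∑ i, i · s_i) mod (n+1)`. -/
def synBin {n : ℕ} (S : Fin n → Fin 2) : ℕ :=
  (∑ i : Fin n, (i.val + 1) * (S i).val) % (n + 1)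

/-- The binary VT code `VT_a(n)`. -/
def VTbin (n : ℕ) (a : ℕ) : Finset (Fin n → Fin 2) :=
  Finset.univ.filter fun S => synBin S = a

private lemma sum_testBit (r : ℕ) : ∀ m : ℕ,
    ∑ k ∈ Finset.range m, 2 ^ k * (r.testBit k).toNat = r % 2 ^ m := by
  intro m
  induction m with
  | zero => simp [Nat.mod_one]
  | succ m ih =>
    rw [Finset.sum_range_succ, ih, pow_succ, Nat.mod_mul]
    congr 1
    rw [Nat.testBit_eq_decide_div_mod_eq]
    rcases Nat.mod_two_eq_zero_or_one (r / 2 ^ m) with h | h <;> simp [h]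

theorem vt_binary_card_lower_bound (n : ℕ) (hn : 1 ≤ n) (a : ℕ) (ha : a ≤ n) :
    2 ^ (n - Nat.clog 2 (n + 1)) ≤ (VTbin n a).card := by
  classical
  set t := Nat.clog 2 (n + 1) with ht
  have h2t : n + 1 ≤ 2 ^ t := Nat.le_pow_clog (by norm_num) _
  have hsmall : ∀ k < t, 2 ^ k ≤ n := by
    intro k hk
    have h1 : 2 ^ (t - 1) < n + 1 :=
      Nat.pow_pred_clog_lt_self (by norm_num) (by omega)
    have : 2 ^ k ≤ 2 ^ (t - 1) := Nat.pow_le_pow_right (by norm_num) (by omega)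
    omega
  -- dyadic positions
  set D : Finset (Fin n) :=
    Finset.univ.filter (fun i : Fin n => 2 ^ Nat.log 2 (i.val + 1) = i.val + 1) with hD
  have hmemD : ∀ i : Fin n, i ∈ D ↔ 2 ^ Nat.log 2 (i.val + 1) = i.val + 1 := by
    intro i
    rw [hD, Finset.mem_filter]
    simp
  -- auxiliary constructions for the bijection D ≃ range t
  have hlog_lt : ∀ i : Fin n, i ∈ D → Nat.log 2 (i.val + 1) ∈ Finset.range t := by
    intro i hi
    have hiD := (hmemD i).mp hi
    have hle : i.val + 1 ≤ n := by omega
    have hlt : 2 ^ Nat.log 2 (i.val + 1) < 2 ^ t := by omega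
    exact Finset.mem_range.mpr ((Nat.pow_lt_pow_iff_right (by norm_num : (1:ℕ) < 2)).mp hlt)
  have hjlt : ∀ k ∈ Finset.range t, 2 ^ k - 1 < n := by
    intro k hk
    have := hsmall k (Finset.mem_range.mp hk)
    have h1 : 1 ≤ 2 ^ k := Nat.one_le_two_pow
    omega
  have hjmem : ∀ (k : ℕ) (hk : k ∈ Finset.range t),
      (⟨2 ^ k - 1, hjlt k hk⟩ : Fin n) ∈ D := by
    intro k hk
    have h1 : 1 ≤ 2 ^ k := Nat.one_le_two_pow
    apply (hmemD _).mpr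
    simp only
    rw [show 2 ^ k - 1 + 1 = 2 ^ k by omega, Nat.log_pow (by norm_num)]
  -- card of D is t
  have hcardD : D.card = t := by
    rw [show t = (Finset.range t).card by simp]
    refine Finset.card_bij' (fun i _ => Nat.log 2 (i.val + 1))
      (fun k hk => ⟨2 ^ k - 1, hjlt k hk⟩) hlog_lt hjmem ?_ ?_
    · intro i hi
      have hiD := (hmemD i).mp hi
      ext
      simp only
      omega
    · intro k hk
      have h1 : 1 ≤ 2 ^ k := Nat.one_le_two_pow
      simp only
      rw [show 2 ^ k - 1 + 1 = 2 ^ k by omega, Nat.log_pow (by norm_num)]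
  -- the encoder
  let bit : Bool → Fin 2 := fun b => if b then 1 else 0
  have hbit : ∀ b, (bit b).val = b.toNat := by intro b; cases b <;> rfl
  let psum : ({i // i ∈ Dᶜ} → Fin 2) → ℕ :=
    fun f => ∑ i ∈ Dᶜ.attach, (i.1.val + 1) * (f i).val
  let rem : ({i // i ∈ Dᶜ} → Fin 2) → ℕ :=
    fun f => (a + (n + 1) - psum f % (n + 1)) % (n + 1)
  let enc : ({i // i ∈ Dᶜ} → Fin 2) → (Fin n → Fin 2) :=
    fun f i => if h : i ∈ D then bit ((rem f).testBit (Nat.log 2 (i.val + 1)))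
      else f ⟨i, Finset.mem_compl.mpr h⟩
  -- enc lands in VTbin
  have hmem : ∀ f, enc f ∈ VTbin n a := by
    intro f
    have hr_lt : rem f < n + 1 := Nat.mod_lt _ (by omega)
    simp only [VTbin, Finset.mem_filter, Finset.mem_univ, true_and]
    unfold synBin
    have hsplit : ∑ i : Fin n, (i.val + 1) * (enc f i).val =
        (∑ i ∈ D, (i.val + 1) * (enc f i).val) +
        (∑ i ∈ Dᶜ, (i.val + 1) * (enc f i).val) :=
      (Finset.sum_add_sum_compl D _).symm
    have hDsum : ∑ i ∈ D, (i.val + 1) * (enc f i).val = rem f := by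
      have key := Finset.sum_bij' (s := D) (t := Finset.range t)
        (f := fun i : Fin n => (i.val + 1) * (enc f i).val)
        (g := fun k => 2 ^ k * ((rem f).testBit k).toNat)
        (fun i _ => Nat.log 2 (i.val + 1))
        (fun k hk => ⟨2 ^ k - 1, hjlt k hk⟩) hlog_lt hjmem ?_ ?_ ?_
      · rw [key, sum_testBit, Nat.mod_eq_of_lt (by omega)]
      · intro i hi
        have hiD := (hmemD i).mp hi
        ext
        simp only
        omega
      · intro k hk
        have h1 : 1 ≤ 2 ^ k := Nat.one_le_two_pow
        simp only
        rw [show 2 ^ k - 1 + 1 = 2 ^ k by omega, Nat.log_pow (by norm_num)]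
      · intro i hi
        have hiD := (hmemD i).mp hi
        show (i.val + 1) * (enc f i).val = _
        simp only [enc]
        rw [dif_pos hi, hbit, hiD]
    have hCsum : ∑ i ∈ Dᶜ, (i.val + 1) * (enc f i).val = psum f := by
      rw [← Finset.sum_attach Dᶜ (fun i => (i.val + 1) * (enc f i).val)]
      apply Finset.sum_congr rfl
      intro i _
      have hiD : i.1 ∉ D := Finset.mem_compl.mp i.2
      simp only [enc]
      rw [dif_neg hiD]
    rw [hsplit, hDsum, hCsum]
    -- arithmetic: (rem f + psum f) % (n+1) = a
    have hmod : psum f % (n + 1) < n + 1 := Nat.mod_lt _ (by omega)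
    rw [Nat.add_mod, Nat.mod_eq_of_lt hr_lt]
    show ((a + (n + 1) - psum f % (n + 1)) % (n + 1) + psum f % (n + 1)) % (n + 1) = a
    rw [Nat.mod_add_mod,
      show a + (n + 1) - psum f % (n + 1) + psum f % (n + 1) = a + (n + 1) by omega,
      Nat.add_mod_right, Nat.mod_eq_of_lt (by omega)]
  -- injectivity
  have hinj : Function.Injective enc := by
    intro f g hfg
    funext i
    have h := congrFun hfg i.1
    have hiD : i.1 ∉ D := Finset.mem_compl.mp i.2
    simp only [enc] at h
    rw [dif_neg hiD, dif_neg hiD] at h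
    simpa using h
  -- conclude by counting
  have key : Fintype.card ({i // i ∈ Dᶜ} → Fin 2) ≤ (VTbin n a).card := by
    rw [← Fintype.card_coe (VTbin n a)]
    exact Fintype.card_le_of_injective (fun f => ⟨enc f, hmem f⟩)
      (fun f g h => hinj (congrArg Subtype.val h))
  have hcount : Fintype.card ({i // i ∈ Dᶜ} → Fin 2) = 2 ^ (n - t) := by
    rw [Fintype.card_fun, Fintype.card_coe, Fintype.card_fin,
      Finset.card_compl, hcardD, Fintype.card_fin]
  omega
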